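/- Discrete grid setting. Let μ > 0, let φ* : Ω_h → ℝ, and let α > max_{x∈Ω_h} |φ*(x)|. Let (η^k)_{k∈ℕ} and (φ^k)_{k∈ℕ} be sequences of functions from Ω_h to ℝ satisfying, for every k ∈ ℕ and every x ∈ Ω_h, the soft-thresholding update η^{k+1}(x) = sign( η^k(x) + μ·φ^k(x) ) · max{ |η^k(x) + μ·φ^k(x)| − α·μ, 0 } (the proximal map of α·μ·|·| applied to η^k(x) + μ·φ^k(x)). If max_{x∈Ω_h} |η^k(x)| → 0 and max_{x∈Ω_h} |φ^k(x) − φ*(x)| → 0 as k → ∞, then there exists K ∈ ℕ such that η^k(x) = 0 for every x ∈ Ω_h and every k ≥ K. -/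
import Mathlib


open Filter Topology

/-- the UOT source iterates vanish eventually.
Let `α > max_x |φ*(x)|` and suppose the source iterates `η^k` follow the
soft-thresholding update
`η^{k+1}(x) = sign(η^k(x) + μ φ^k(x)) · max{|η^k(x) + μ φ^k(x)| − α μ, 0}`
(the proximal map of `α·μ·|·|`).  If `max_x |η^k(x)| → 0` and
`max_x |φ^k(x) − φ*(x)| → 0`, then `η^k ≡ 0` on the grid for all large `k`. -/
theorem uot_iterates_reduce_to_ot (d N : ℕ) (hd : 1 ≤ d) (hN : 1 ≤ N)
    (h : ℝ) (hh : 0 < h) (μ : ℝ) (hμ : 0 < μ)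
    (φstar : (Fin d → Fin (N + 1)) → ℝ) (α : ℝ)
    (hα : Finset.univ.sup' Finset.univ_nonempty (fun x => |φstar x|) < α)
    (η φ : ℕ → (Fin d → Fin (N + 1)) → ℝ)
    (hupd : ∀ (k : ℕ) (x : Fin d → Fin (N + 1)),
      η (k + 1) x = Real.sign (η k x + μ * φ k x) *
        max (|η k x + μ * φ k x| - α * μ) 0)
    (hη : Tendsto
      (fun k => Finset.univ.sup' Finset.univ_nonempty (fun x => |η k x|))
      atTop (𝓝 0))
    (hφ : Tendsto
      (fun k => Finset.univ.sup' Finset.univ_nonempty (fun x => |φ k x - φstar x|))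
      atTop (𝓝 0)) :
    ∃ K : ℕ, ∀ k ≥ K, ∀ x : Fin d → Fin (N + 1), η k x = 0 := by
  set M := Finset.univ.sup' Finset.univ_nonempty (fun x => |φstar x|) with hM
  set ε := (α - M) / 2 with hεdef
  have hε0 : 0 < ε := by rw [hεdef]; linarith
  have h1 := hη.eventually_lt_const (show (0:ℝ) < μ * ε by positivity)
  have h2 := hφ.eventually_lt_const hε0
  obtain ⟨K, hK⟩ := Filter.eventually_atTop.mp (h1.and h2)
  refine ⟨K + 1, fun k hk x => ?_⟩
  obtain ⟨m, rfl⟩ : ∃ m, k = m + 1 := ⟨k - 1, by omega⟩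
  obtain ⟨hA, hB⟩ := hK m (by omega)
  have hη' : |η m x| < μ * ε :=
    lt_of_le_of_lt (Finset.le_sup' (fun y => |η m y|) (Finset.mem_univ x)) hA
  have hφ' : |φ m x - φstar x| < ε :=
    lt_of_le_of_lt (Finset.le_sup' (fun y => |φ m y - φstar y|) (Finset.mem_univ x)) hB
  have hφs : |φstar x| ≤ M := Finset.le_sup' (fun y => |φstar y|) (Finset.mem_univ x)
  have hbound : |η m x + μ * φ m x| ≤ α * μ := by
    have t1 : |η m x + μ * φ m x| ≤ |η m x| + |μ * φ m x| := abs_add_le _ _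
    have t2 : |μ * φ m x| = μ * |φ m x| := by rw [abs_mul, abs_of_pos hμ]
    have t3 : |φ m x| ≤ |φ m x - φstar x| + |φstar x| := by
      calc |φ m x| = |(φ m x - φstar x) + φstar x| := by ring_nf
        _ ≤ _ := abs_add_le _ _
    have t4 : μ * |φ m x| ≤ μ * (ε + M) :=
      mul_le_mul_of_nonneg_left (by linarith) hμ.le
    nlinarith
  rw [hupd m x]
  have hz : max (|η m x + μ * φ m x| - α * μ) 0 = 0 := max_eq_right (by linarith)
  rw [hz, mul_zero]
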